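/- arXiv:2103.09164 — 2 statements merged into one kernel-verified Lean document; each statement's English description precedes it below -/
import Mathlib

section
/- Let V_maven(q) = P[Binom(2N,q) < N] + (1/2)·P[Binom(2N,q) = N] for q in [0,1/2]. Then V_maven'(q) = -C(2N-1, N)·N·q^{N-1}(1-q)^{N-1}, and in particular V_maven'(0) = 0 for N ≥ 2. -/
/-- The probability mass function of a binomial random variable with `n` trials
and success probability `p`, evaluated at `k`. -/
noncomputable def binomPMF (n : ℕ) (p : ℝ) (k : ℕ) : ℝ :=
  (n.choose k : ℝ) * p ^ k * (1 - p) ^ (n - k)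

private lemma hasDerivAt_binomPMF (n k : ℕ) (q : ℝ) :
    HasDerivAt (fun q => binomPMF n q k)
      ((n.choose k : ℝ) * ((k : ℝ) * q ^ (k-1) * (1-q) ^ (n-k)
        - ((n-k : ℕ):ℝ) * q ^ k * (1-q) ^ (n-k-1))) q := by
  have h1 : HasDerivAt (fun q : ℝ => q ^ k) ((k:ℝ) * q ^ (k-1)) q := hasDerivAt_pow k q
  have h2 : HasDerivAt (fun q : ℝ => (1-q) ^ (n-k))
      (-(((n-k : ℕ):ℝ) * (1-q) ^ (n-k-1))) q := by
    have := (hasDerivAt_pow (n-k) (1-q)).comp q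
      ((hasDerivAt_const q (1:ℝ)).sub (hasDerivAt_id q))
    simpa [Function.comp_def] using this
  have h := ((h1.const_mul ((n.choose k : ℝ))).mul h2)
  refine h.congr_deriv ?_
  ring

private lemma sub_mul_choose (n k : ℕ) (hk : k ≤ n - 1) (hn : 1 ≤ n) :
    (n - k) * n.choose k = n * (n-1).choose k := by
  have h1 : (n-1).choose k = (n-1).choose (n-1-k) := (Nat.choose_symm hk).symm
  have h2 : n.choose k = n.choose (n - k) :=
    (Nat.choose_symm (le_trans hk (Nat.sub_le _ _))).symm
  have h3 := Nat.add_one_mul_choose_eq (n-1) (n-1-k)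
  have e1 : n - 1 + 1 = n := by omega
  have e2 : n - 1 - k + 1 = n - k := by omega
  rw [e1, e2] at h3
  rw [h1, h2, h3, Nat.mul_comm]

private lemma key (N : ℕ) (hN : 2 ≤ N) (q : ℝ) :
    HasDerivAt (fun q : ℝ => (∑ k ∈ Finset.range N, binomPMF (2*N) q k)
        + (1/2) * binomPMF (2*N) q N)
      (-(((2*N-1).choose N : ℝ)) * N * q ^ (N-1) * (1 - q) ^ (N-1)) q := by
  set n := 2*N with hn
  have hsum : HasDerivAt (fun q : ℝ => ∑ k ∈ Finset.range N, binomPMF n q k)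
      (∑ k ∈ Finset.range N, ((n.choose k : ℝ) * ((k : ℝ) * q ^ (k-1) * (1-q) ^ (n-k)
        - ((n-k:ℕ):ℝ) * q ^ k * (1-q) ^ (n-k-1)))) q :=
    HasDerivAt.fun_sum (fun k _ => hasDerivAt_binomPMF n k q)
  have hmid := (hasDerivAt_binomPMF n N q).const_mul (1/2 : ℝ)
  have h := hsum.add hmid
  refine h.congr_deriv ?_
  set g : ℕ → ℝ := fun j => (n:ℝ) * (((n-1).choose j : ℝ)) * q^j * (1-q)^(n-1-j) with hg
  set H : ℕ → ℝ := fun k => match k with | 0 => 0 | (j+1) => g j with hH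
  have tele : ∀ k ∈ Finset.range N,
      ((n.choose k : ℝ) * ((k : ℝ) * q ^ (k-1) * (1-q) ^ (n-k)
        - ((n-k:ℕ):ℝ) * q ^ k * (1-q) ^ (n-k-1))) = H k - H (k+1) := by
    intro k hk
    rw [Finset.mem_range] at hk
    match k with
    | 0 =>
      show _ = 0 - g 0
      simp only [hg, Nat.cast_zero, Nat.choose_zero_right, Nat.cast_one, pow_zero,
        Nat.sub_zero]
      ring
    | (j+1) =>
      show _ = g j - g (j+1)
      have hj1 : j + 1 ≤ n - 1 := by omega
      have c1n : (j+1) * n.choose (j+1) = n * (n-1).choose j := by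
        have h3 := Nat.add_one_mul_choose_eq (n-1) j
        have e1 : n - 1 + 1 = n := by omega
        rw [e1] at h3
        rw [h3, Nat.mul_comm]
      have c1 : ((j+1:ℕ):ℝ) * (n.choose (j+1) : ℝ) = (n:ℝ) * ((n-1).choose j : ℝ) := by
        exact_mod_cast congrArg (Nat.cast : ℕ → ℝ) c1n
      have c2 : ((n-(j+1):ℕ):ℝ) * (n.choose (j+1):ℝ) = (n:ℝ) * ((n-1).choose (j+1):ℝ) := by
        exact_mod_cast congrArg (Nat.cast : ℕ → ℝ) (sub_mul_choose n (j+1) hj1 (by omega))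
      have e2 : n - (j+1) = n - 1 - j := by omega
      have e3 : n - (j+1) - 1 = n - 1 - (j+1) := by omega
      have e4 : n - 1 - j - 1 = n - 1 - (j+1) := by omega
      rw [e2] at c2
      simp only [hg, Nat.add_sub_cancel, e2, e3, e4]
      push_cast at c1 c2 ⊢
      linear_combination (q^j * (1-q)^(n-1-j)) * c1 - (q^(j+1) * (1-q)^(n-1-(j+1))) * c2
  rw [Finset.sum_congr rfl tele, Finset.sum_range_sub' H N]
  have eN : N = (N-1)+1 := by omega
  have hHN : H N = g (N-1) := by rw [eN]; rfl
  have hH0 : H 0 = 0 := rfl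
  rw [hHN, hH0]
  simp only [hg]
  have f1 : (((n-1).choose (N-1)) : ℝ) = (((n-1).choose N) : ℝ) := by
    have e : (n-1) - N = N - 1 := by omega
    rw [← Nat.choose_symm (by omega : N ≤ n - 1), e]
  have f2 : ((n.choose N) : ℝ) = 2 * (((n-1).choose N) : ℝ) := by
    have h4 : n.choose N = (n-1).choose (N-1) + (n-1).choose N := by
      have e1 : n = (n-1) + 1 := by omega
      have h5 := Nat.choose_succ_succ (n-1) (N-1)
      simp only [Nat.succ_eq_add_one] at h5
      rw [← e1, ← eN] at h5
      exact h5
    rw [h4]; push_cast [f1]; ring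
  have e5 : n - 1 - (N - 1) = N := by omega
  have e6 : n - N = N := by omega
  have e7 : n - N - 1 = N - 1 := by omega
  have e8 : (n:ℝ) = 2 * N := by rw [hn]; push_cast; ring
  rw [e5, e7, e6, f1, f2, e8]
  have pq : q ^ N = q ^ (N-1) * q := by rw [eN, pow_succ, ← eN]
  have pp : (1-q) ^ N = (1-q) ^ (N-1) * (1-q) := by rw [eN, pow_succ, ← eN]
  rw [pq, pp]
  ring

/-- V_maven(q) = P[Binom(2N,q) < N] + (1/2)P[Binom(2N,q) = N] has derivative
-C(2N-1,N) N q^{N-1} (1-q)^{N-1} on [0,1/2]; in particular the derivative at 0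
is 0 when N ≥ 2. -/
theorem stmt_1 (N : ℕ) (hN : 2 ≤ N) :
    (∀ q ∈ Set.Icc (0:ℝ) (1/2),
      HasDerivAt
        (fun q : ℝ => (∑ k ∈ Finset.range N, binomPMF (2*N) q k)
          + (1/2) * binomPMF (2*N) q N)
        (-(((2*N-1).choose N : ℝ)) * N * q ^ (N-1) * (1 - q) ^ (N-1)) q) ∧
    HasDerivAt
      (fun q : ℝ => (∑ k ∈ Finset.range N, binomPMF (2*N) q k)
        + (1/2) * binomPMF (2*N) q N) 0 0 := by
  refine ⟨fun q _ => key N hN q, ?_⟩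
  have h := key N hN 0
  simpa [zero_pow (show N - 1 ≠ 0 by omega)] using h
end

section
/- Fix N ≥ 2 and h ∈ (0,1) with h/(1-h) ≤ C(2N-1,N)·(1/2)^{N-1}. The function U(q) = -h(1-q)^N + (1-h)·(P[Binom(2N,q) < N] + (1/2)P[Binom(2N,q) = N]) on [0,1/2] attains its maximum at q* = (h/((1-h)·C(2N-1,N)))^{1/(N-1)}. -/
/-- The principal's expected payoff from noise level `q`, when a fraction `h`
of agents are hackers:
U(q) = -h(1-q)^N + (1-h)(P[Binom(2N,q) < N] + (1/2)P[Binom(2N,q) = N]). -/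
noncomputable def principalPayoff (N : ℕ) (h : ℝ) (q : ℝ) : ℝ :=
  -h * (1 - q) ^ N
    + (1 - h) * ((∑ k ∈ Finset.range N, binomPMF (2*N) q k)
        + (1/2) * binomPMF (2*N) q N)


lemma natid1 (n k : ℕ) (h1 : 1 ≤ k) (h2 : k ≤ n) : k * n.choose k = n * (n-1).choose (k-1) := by
  obtain ⟨j, rfl⟩ : ∃ j, k = j + 1 := ⟨k-1, by omega⟩
  obtain ⟨m, rfl⟩ : ∃ m, n = m + 1 := ⟨n-1, by omega⟩
  simp only [Nat.add_sub_cancel]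
  rw [Nat.add_one_mul_choose_eq]
  simp [Nat.succ_eq_add_one, mul_comm]

lemma natid2 (n k : ℕ) (hn : 1 ≤ n) (h2 : k ≤ n - 1) : (n-k) * n.choose k = n * (n-1).choose k := by
  obtain ⟨m, rfl⟩ : ∃ m, n = m + 1 := ⟨n-1, by omega⟩
  simp only [Nat.add_sub_cancel] at h2 ⊢
  rw [Nat.add_one_mul_choose_eq, Nat.choose_succ_right_eq]
  ring


lemma hasDerivAt_oneSubPow (m : ℕ) (q : ℝ) :
    HasDerivAt (fun q : ℝ => (1 - q) ^ m) (-(m : ℝ) * (1 - q)^(m-1)) q := by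
  have h1 : HasDerivAt (fun q : ℝ => 1 - q) (-1) q := by
    simpa using (hasDerivAt_id q).const_sub 1
  have := (hasDerivAt_pow m (1 - q)).comp q h1
  refine this.congr_deriv (Eq.symm ?_)
  ring

lemma hasDerivAt_binom0 (n : ℕ) (hn : 1 ≤ n) (q : ℝ) :
    HasDerivAt (fun q => binomPMF n q 0) (-(n:ℝ) * binomPMF (n-1) q 0) q := by
  have : (fun q : ℝ => binomPMF n q 0) = fun q : ℝ => (1 - q)^n := by
    funext q; simp [binomPMF]
  rw [this, binomPMF]
  simpa using hasDerivAt_oneSubPow n q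

lemma hasDerivAt_binomMid (n k : ℕ) (hk1 : 1 ≤ k) (hk2 : k ≤ n - 1) (q : ℝ) :
    HasDerivAt (fun q => binomPMF n q k)
      ((n:ℝ) * (binomPMF (n-1) q (k-1) - binomPMF (n-1) q k)) q := by
  have hn : 1 ≤ n := by omega
  have h1 : HasDerivAt (fun q : ℝ => q ^ k) ((k:ℝ) * q^(k-1)) q := by
    simpa using hasDerivAt_pow k q
  have h2 := hasDerivAt_oneSubPow (n - k) q
  have := ((h1.mul h2).const_mul ((n.choose k : ℝ)))
  have heq : (fun q : ℝ => binomPMF n q k)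
      = fun q : ℝ => (n.choose k : ℝ) * (q ^ k * (1-q)^(n-k)) := by
    funext q; simp [binomPMF, mul_assoc]
  rw [heq]
  refine this.congr_deriv (Eq.symm ?_)
  simp only [binomPMF]
  have e1 : (n-1) - (k-1) = n - k := by omega
  have e2 : (n-1) - k = n - k - 1 := by omega
  rw [e1, e2]
  have c1 : (k : ℝ) * (n.choose k : ℝ) = (n : ℝ) * ((n-1).choose (k-1) : ℝ) := by
    exact_mod_cast congrArg (Nat.cast : ℕ → ℝ) (natid1 n k hk1 (by omega))
  have c2 : ((n:ℝ) - (k:ℝ)) * (n.choose k : ℝ) = (n : ℝ) * ((n-1).choose k : ℝ) := by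
    have := congrArg (Nat.cast : ℕ → ℝ) (natid2 n k hn hk2)
    push_cast [Nat.cast_sub (by omega : k ≤ n)] at this
    linarith [this]
  have hq : q ^ k = q ^ (k-1) * q := by
    rw [← pow_succ]; congr 1; omega
  have hnk : (1 - q) ^ (n - k) = (1 - q) ^ (n-k-1) * (1 - q) := by
    rw [← pow_succ]; congr 1; omega
  have hcast : ((n - k : ℕ) : ℝ) = (n : ℝ) - (k : ℝ) := by
    rw [Nat.cast_sub (by omega : k ≤ n)]
  rw [hq, hnk, hcast]
  linear_combination (-(q^(k-1) * (1-q)^(n-k-1) * (1-q))) * c1 + (q^(k-1) * (1-q)^(n-k-1) * q) * c2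

lemma hasDerivAt_cdfSum (n m : ℕ) (hm : 1 ≤ m) (hmn : m ≤ n) (q : ℝ) :
    HasDerivAt (fun q => ∑ k ∈ Finset.range m, binomPMF n q k)
      (-(n:ℝ) * binomPMF (n-1) q (m-1)) q := by
  induction m with
  | zero => omega
  | succ m ih =>
    rcases Nat.eq_zero_or_pos m with rfl | hm'
    · have heq : (fun q => ∑ k ∈ Finset.range (0+1), binomPMF n q k)
          = fun q => binomPMF n q 0 := by
        funext q; simp
      rw [heq]
      simpa using hasDerivAt_binom0 n (by omega) q
    · have IH := ih hm' (by omega)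
      have hmid := hasDerivAt_binomMid n m hm' (by omega) q
      have := IH.add hmid
      have heq : (fun q => ∑ k ∈ Finset.range (m+1), binomPMF n q k)
          = fun q => (∑ k ∈ Finset.range m, binomPMF n q k) + binomPMF n q m := by
        funext q; rw [Finset.sum_range_succ]
      rw [heq]
      refine this.congr_deriv (Eq.symm ?_)
      have em : m + 1 - 1 = m := by omega
      rw [em]; ring


lemma hasDerivAt_payoff (N : ℕ) (hN : 2 ≤ N) (h q : ℝ) :
    HasDerivAt (principalPayoff N h)
      ((N:ℝ) * (1-q)^(N-1) * (h - (1-h) * ((2*N-1).choose N : ℝ) * q^(N-1))) q := by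
  have d1 : HasDerivAt (fun q : ℝ => -h * (1 - q)^N) (-h * (-(N:ℝ) * (1-q)^(N-1))) q :=
    (hasDerivAt_oneSubPow N q).const_mul (-h)
  have d2 := hasDerivAt_cdfSum (2*N) N (by omega) (by omega) q
  have d3 := hasDerivAt_binomMid (2*N) N (by omega) (by omega) q
  have d4 := ((d2.add (d3.const_mul (1/2:ℝ))).const_mul (1-h))
  have := d1.add d4
  have heq : principalPayoff N h = fun q => -h * (1 - q)^N
      + (1-h) * ((∑ k ∈ Finset.range N, binomPMF (2*N) q k) + (1/2) * binomPMF (2*N) q N) := by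
    funext q; rfl
  rw [heq]
  refine this.congr_deriv (Eq.symm ?_)
  simp only [binomPMF]
  have e1 : 2*N - 1 - (N - 1) = N := by omega
  have e2 : 2*N - 1 - N = N - 1 := by omega
  rw [e1, e2]
  have csym : ((2*N-1).choose (N-1) : ℝ) = ((2*N-1).choose N : ℝ) := by
    have : (2*N-1).choose (N-1) = (2*N-1).choose N := by
      rw [← Nat.choose_symm (by omega : N ≤ 2*N-1)]
      congr 1; omega
    exact_mod_cast this
  rw [csym]
  have hq : q ^ N = q ^ (N-1) * q := by rw [← pow_succ]; congr 1; omega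
  have hp : (1-q) ^ N = (1-q) ^ (N-1) * (1-q) := by rw [← pow_succ]; congr 1; omega
  rw [hq, hp]
  push_cast
  ring

/-- If h/(1-h) ≤ C(2N-1,N) (1/2)^{N-1}, then U attains its maximum on [0,1/2]
at q* = (h/((1-h) C(2N-1,N)))^{1/(N-1)}. -/
theorem stmt_3 (N : ℕ) (hN : 2 ≤ N) (h : ℝ) (hh : h ∈ Set.Ioo (0:ℝ) 1)
    (hcond : h / (1 - h) ≤ ((2*N-1).choose N : ℝ) * (1/2) ^ (N-1)) :
    let qstar : ℝ := (h / ((1 - h) * ((2*N-1).choose N : ℝ))) ^ ((1:ℝ)/(N-1))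
    qstar ∈ Set.Icc (0:ℝ) (1/2) ∧
      ∀ q ∈ Set.Icc (0:ℝ) (1/2), principalPayoff N h q ≤ principalPayoff N h qstar := by
  obtain ⟨hh0, hh1⟩ := hh
  intro qstar
  have h1h : (0:ℝ) < 1 - h := by linarith
  set C : ℝ := ((2*N-1).choose N : ℝ) with hC
  have hCpos : 0 < C := by
    have : 0 < (2*N-1).choose N := Nat.choose_pos (by omega)
    rw [hC]; exact_mod_cast this
  set A : ℝ := h / ((1 - h) * C) with hA
  have hApos : 0 < A := by positivity
  have hqdef : qstar = A ^ ((1:ℝ)/((N:ℝ)-1)) := rfl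
  have hN1 : (0:ℝ) < (N:ℝ) - 1 := by
    have : (2:ℝ) ≤ (N:ℝ) := by exact_mod_cast hN
    linarith
  have hcastN : ((N - 1 : ℕ) : ℝ) = (N:ℝ) - 1 := by
    rw [Nat.cast_sub (by omega : 1 ≤ N)]; norm_num
  have hq0 : 0 ≤ qstar := by
    rw [hqdef]; exact Real.rpow_nonneg hApos.le _
  -- qstar ^ (N-1) = A
  have hpow : qstar ^ (N - 1 : ℕ) = A := by
    rw [hqdef, ← Real.rpow_natCast (A ^ ((1:ℝ)/((N:ℝ)-1))) (N-1),
      ← Real.rpow_mul hApos.le, hcastN, one_div, inv_mul_cancel₀ (ne_of_gt hN1),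
      Real.rpow_one]
  -- A ≤ (1/2)^(N-1)
  have hA2 : A ≤ (1/2 : ℝ) ^ (N - 1 : ℕ) := by
    rw [hA, div_le_iff₀ (by positivity)]
    have h3 := (div_le_iff₀ h1h).mp hcond
    calc h ≤ C * (1/2)^(N-1) * (1-h) := by rw [hC]; exact h3
      _ = (1/2)^(N-1) * ((1-h) * C) := by ring
  have hqhalf : qstar ≤ 1/2 := by
    have h1 : qstar ≤ ((1/2 : ℝ) ^ (N - 1 : ℕ)) ^ ((1:ℝ)/((N:ℝ)-1)) := by
      rw [hqdef]
      exact Real.rpow_le_rpow hApos.le hA2 (by positivity)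
    have h2 : ((1/2 : ℝ) ^ (N - 1 : ℕ)) ^ ((1:ℝ)/((N:ℝ)-1)) = 1/2 := by
      rw [← Real.rpow_natCast (1/2 : ℝ) (N-1), ← Real.rpow_mul (by norm_num),
        hcastN, mul_one_div, div_self (ne_of_gt hN1), Real.rpow_one]
    rw [h2] at h1; exact h1
  -- monotone on [0, qstar]
  have hderiv : ∀ x : ℝ, deriv (principalPayoff N h) x
      = (N:ℝ) * (1-x)^(N-1) * (h - (1-h) * C * x^(N-1)) :=
    fun x => (hasDerivAt_payoff N hN h x).deriv
  have hdiff : ∀ s : Set ℝ, DifferentiableOn ℝ (principalPayoff N h) s :=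
    fun s x _ => (hasDerivAt_payoff N hN h x).differentiableAt.differentiableWithinAt
  have hcont : ∀ s : Set ℝ, ContinuousOn (principalPayoff N h) s :=
    fun s x _ => (hasDerivAt_payoff N hN h x).continuousAt.continuousWithinAt
  have hACh : (1-h) * C * A = h := by
    rw [hA]; field_simp
  have mono : MonotoneOn (principalPayoff N h) (Set.Icc 0 qstar) := by
    apply monotoneOn_of_deriv_nonneg (convex_Icc _ _) (hcont _) (hdiff _)
    intro x hx
    rw [interior_Icc] at hx
    obtain ⟨hx0, hx1⟩ := hx
    rw [hderiv]
    have hxp : x ^ (N-1 : ℕ) ≤ A := by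
      rw [← hpow]; exact pow_le_pow_left₀ hx0.le hx1.le _
    have : (1-h) * C * x^(N-1) ≤ h := by
      calc (1-h) * C * x^(N-1) ≤ (1-h) * C * A := by
            apply mul_le_mul_of_nonneg_left hxp (by positivity)
        _ = h := hACh
    have hx12 : x < 1 := lt_of_lt_of_le hx1 (by linarith)
    have h1x : (0:ℝ) ≤ 1 - x := by linarith
    have := mul_nonneg (mul_nonneg (by positivity : (0:ℝ) ≤ (N:ℝ)) (pow_nonneg h1x (N-1)))
      (by linarith : (0:ℝ) ≤ h - (1-h) * C * x^(N-1))
    linarith [this]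
  have anti : AntitoneOn (principalPayoff N h) (Set.Icc qstar (1/2)) := by
    apply antitoneOn_of_deriv_nonpos (convex_Icc _ _) (hcont _) (hdiff _)
    intro x hx
    rw [interior_Icc] at hx
    obtain ⟨hx0, hx1⟩ := hx
    rw [hderiv]
    have hxp : A ≤ x ^ (N-1 : ℕ) := by
      rw [← hpow]; exact pow_le_pow_left₀ hq0 hx0.le _
    have : h ≤ (1-h) * C * x^(N-1) := by
      calc h = (1-h) * C * A := hACh.symm
        _ ≤ (1-h) * C * x^(N-1) := mul_le_mul_of_nonneg_left hxp (by positivity)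
    have h1x : (0:ℝ) ≤ 1 - x := by linarith
    have := mul_nonpos_of_nonneg_of_nonpos
      (mul_nonneg (by positivity : (0:ℝ) ≤ (N:ℝ)) (pow_nonneg h1x (N-1)))
      (by linarith : h - (1-h) * C * x^(N-1) ≤ 0)
    linarith [this]
  refine ⟨⟨hq0, hqhalf⟩, fun q hq => ?_⟩
  obtain ⟨hq1, hq2⟩ := hq
  rcases le_total q qstar with hle | hle
  · exact mono ⟨hq1, hle⟩ ⟨hq0, le_rfl⟩ hle
  · exact anti ⟨le_rfl, hqhalf⟩ ⟨hle, hq2⟩ hle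
end
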